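/- arXiv:1606.08333 — 13 statements merged into one kernel-verified Lean document; each statement's English description precedes it below -/
import Mathlib

section
/- There are no non-trivial true lies on the class K of all Kripke models: for every formula φ of believed announcement logic, if the formula ¬φ → [φ]φ is valid on K, then φ itself is valid on K (equivalently, ¬φ is unsatisfiable on K). -/
inductive Form (A : Type) : Type
  | atom : ℕ → Form A
  | neg  : Form A → Form A
  | conj : Form A → Form A → Form A
  | box  : A → Form A → Form A
  | ann  : Form A → Form A → Form A
  deriving DecidableEq

namespace Form

/-- ◇_a φ := ¬□_a¬φ -/
def dia {A : Type} (a : A) (φ : Form A) : Form A := .neg (.box a (.neg φ))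

/-- φ → ψ := ¬(φ ∧ ¬ψ) -/
def imp {A : Type} (φ ψ : Form A) : Form A := .neg (.conj φ (.neg ψ))

/-- φ ∨ ψ := ¬(¬φ ∧ ¬ψ) -/
def or {A : Type} (φ ψ : Form A) : Form A := .neg (.conj (.neg φ) (.neg ψ))

/-- ⊥ := p ∧ ¬p -/
def bot {A : Type} : Form A := .conj (.atom 0) (.neg (.atom 0))

def top {A : Type} : Form A := .neg bot

def iff {A : Type} (φ ψ : Form A) : Form A := .conj (imp φ ψ) (imp ψ φ)

end Form

/-- A Kripke model over agents `A` with state set `S`. -/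
structure Model (A S : Type) where
  R : A → S → S → Prop
  V : ℕ → S → Prop

/-- Arrow elimination: keep only arrows pointing to states satisfying `P`. -/
def Model.restrict {A S : Type} (M : Model A S) (P : S → Prop) : Model A S :=
  ⟨fun a s t => M.R a s t ∧ P t, M.V⟩

/-- Satisfaction, with believed announcements interpreted by arrow elimination. -/
def Sat {A S : Type} : Model A S → Form A → S → Prop
  | M, .atom n, s => M.V n s
  | M, .neg φ, s => ¬ Sat M φ s
  | M, .conj φ ψ, s => Sat M φ s ∧ Sat M ψ s
  | M, .box a φ, s => ∀ t : S, M.R a s t → Sat M φ t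
  | M, .ann φ ψ, s => Sat (M.restrict (fun t => Sat M φ t)) ψ s

/-- K45: every accessibility relation is transitive and euclidean. -/
def isK45 {A S : Type} (M : Model A S) : Prop :=
  ∀ a : A, (∀ x y z : S, M.R a x y → M.R a y z → M.R a x z) ∧
    (∀ x y z : S, M.R a x y → M.R a x z → M.R a y z)

/-- KD45: every accessibility relation is transitive, euclidean and serial. -/
def isKD45 {A S : Type} (M : Model A S) : Prop :=
  ∀ a : A, (∀ x y z : S, M.R a x y → M.R a y z → M.R a x z) ∧
    (∀ x y z : S, M.R a x y → M.R a x z → M.R a y z) ∧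
    (∀ x : S, ∃ y : S, M.R a x y)

namespace NoTrueLies

variable {A S : Type}

/-- Modal depth (announcements count as the sum). -/
def depth {A : Type} : Form A → ℕ
  | .atom _ => 0
  | .neg φ => depth φ
  | .conj φ ψ => max (depth φ) (depth ψ)
  | .box _ φ => depth φ + 1
  | .ann φ ψ => depth φ + depth ψ

/-- Reachability (any agent, reflexive-transitive). -/
def reach (M : Model A S) (s t : S) : Prop :=
  Relation.ReflTransGen (fun x y => ∃ a, M.R a x y) s t

lemma reach_restrict {M : Model A S} {P : S → Prop} {s t : S}
    (h : reach (M.restrict P) s t) : reach M s t :=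
  Relation.ReflTransGen.mono (r := fun x y => ∃ a, (M.restrict P).R a x y)
    (p := fun x y => ∃ a, M.R a x y) (fun _ _ hx => ⟨hx.choose, hx.choose_spec.1⟩) _ _ h

/-- Truth at `s` only depends on the model on states reachable from `s`. -/
lemma agree : ∀ (ψ : Form A) (M₁ M₂ : Model A S) (s : S),
    (∀ t, reach M₁ s t → ∀ a u, M₁.R a t u ↔ M₂.R a t u) →
    (∀ t, reach M₁ s t → ∀ n, M₁.V n t ↔ M₂.V n t) →
    (Sat M₁ ψ s ↔ Sat M₂ ψ s) := by
  intro ψ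
  induction ψ with
  | atom n =>
    intro M₁ M₂ s hR hV
    simpa [Sat] using hV s Relation.ReflTransGen.refl n
  | neg φ ih =>
    intro M₁ M₂ s hR hV
    simp only [Sat]
    exact not_congr (ih M₁ M₂ s hR hV)
  | conj φ ψ ihφ ihψ =>
    intro M₁ M₂ s hR hV
    simp only [Sat]
    exact and_congr (ihφ M₁ M₂ s hR hV) (ihψ M₁ M₂ s hR hV)
  | box a φ ih =>
    intro M₁ M₂ s hR hV
    simp only [Sat]
    constructor
    · intro H u hu
      have hu₁ : M₁.R a s u := (hR s Relation.ReflTransGen.refl a u).mpr hu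
      have hru : reach M₁ s u := Relation.ReflTransGen.single ⟨a, hu₁⟩
      exact (ih M₁ M₂ u (fun t ht => hR t (hru.trans ht))
        (fun t ht => hV t (hru.trans ht))).mp (H u hu₁)
    · intro H u hu
      have hru : reach M₁ s u := Relation.ReflTransGen.single ⟨a, hu⟩
      have hu₂ : M₂.R a s u := (hR s Relation.ReflTransGen.refl a u).mp hu
      exact (ih M₁ M₂ u (fun t ht => hR t (hru.trans ht))
        (fun t ht => hV t (hru.trans ht))).mpr (H u hu₂)
  | ann φ ψ ihφ ihψ =>
    intro M₁ M₂ s hR hV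
    simp only [Sat]
    apply ihψ
    · intro t ht a u
      have ht₁ : reach M₁ s t := reach_restrict ht
      simp only [Model.restrict]
      constructor
      · rintro ⟨hr, hs⟩
        have hru : reach M₁ s u := ht₁.tail ⟨a, hr⟩
        exact ⟨(hR t ht₁ a u).mp hr,
          (ihφ M₁ M₂ u (fun t' ht' => hR t' (hru.trans ht'))
            (fun t' ht' => hV t' (hru.trans ht'))).mp hs⟩
      · rintro ⟨hr, hs⟩
        have hr₁ : M₁.R a t u := (hR t ht₁ a u).mpr hr
        have hru : reach M₁ s u := ht₁.tail ⟨a, hr₁⟩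
        exact ⟨hr₁,
          (ihφ M₁ M₂ u (fun t' ht' => hR t' (hru.trans ht'))
            (fun t' ht' => hV t' (hru.trans ht'))).mpr hs⟩
    · intro t ht n
      exact hV t (reach_restrict ht) n

/-- `N` on `S × ℕ` matches `M` above level `m`:
arrows always go down exactly one level, above level `m` they copy `M`'s arrows,
and the valuation always copies `M`'s. -/
def Good (M : Model A S) (N : Model A (S × ℕ)) (m : ℕ) : Prop :=
  (∀ a u v, N.R a u v → v.2 + 1 = u.2) ∧
  (∀ a x y k, m ≤ k → (N.R a (x, k + 1) (y, k) ↔ M.R a x y)) ∧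
  (∀ n x k, N.V n (x, k) ↔ M.V n x)

lemma tower : ∀ (ψ : Form A) (M : Model A S) (N : Model A (S × ℕ)) (m : ℕ),
    Good M N m → ∀ (x : S) (n : ℕ), m + depth ψ ≤ n →
      (Sat N ψ (x, n) ↔ Sat M ψ x) := by
  intro ψ
  induction ψ with
  | atom p =>
    intro M N m hG x n hn
    simpa [Sat] using hG.2.2 p x n
  | neg φ ih =>
    intro M N m hG x n hn
    simp only [Sat]
    exact not_congr (ih M N m hG x n (by simpa [depth] using hn))
  | conj φ ψ ihφ ihψ =>
    intro M N m hG x n hn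
    simp only [Sat]
    simp only [depth] at hn
    exact and_congr (ihφ M N m hG x n (by omega)) (ihψ M N m hG x n (by omega))
  | box a φ ih =>
    intro M N m hG x n hn
    simp only [depth] at hn
    obtain ⟨k, rfl⟩ : ∃ k, n = k + 1 := ⟨n - 1, by omega⟩
    simp only [Sat]
    constructor
    · intro H y hy
      have hr : N.R a (x, k + 1) (y, k) := (hG.2.1 a x y k (by omega)).mpr hy
      exact (ih M N m hG y k (by omega)).mp (H (y, k) hr)
    · rintro H ⟨y, j⟩ hr
      have hj : j = k := by have := hG.1 a _ _ hr; simp at this; omega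
      subst hj
      have hy : M.R a x y := (hG.2.1 a x y j (by omega)).mp hr
      exact (ih M N m hG y j (by omega)).mpr (H y hy)
  | ann φ ψ ihφ ihψ =>
    intro M N m hG x n hn
    simp only [depth] at hn
    simp only [Sat]
    apply ihψ (M.restrict fun t => Sat M φ t)
      (N.restrict fun t => Sat N φ t) (m + depth φ)
    · refine ⟨?_, ?_, ?_⟩
      · rintro a u v ⟨hr, _⟩
        exact hG.1 a u v hr
      · intro a y z k hk
        simp only [Model.restrict]
        exact and_congr (hG.2.1 a y z k (by omega)) (ihφ M N m hG z k (by omega))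
      · intro p y k
        exact hG.2.2 p y k
    · omega

/-- On graded models (every arrow strictly decreases a grade), the
hypothesis `¬φ → [φ]φ` forces `φ` everywhere. -/
lemma graded_valid (φ : Form A) {T : Type}
    (h : ∀ (S : Type) (M : Model A S) (s : S),
      Sat M (Form.imp (Form.neg φ) (Form.ann φ φ)) s)
    (N : Model A T) (f : T → ℕ) (hf : ∀ a u v, N.R a u v → f v < f u) :
    ∀ u : T, Sat N φ u := by
  have mono : ∀ u t, reach N u t → f t ≤ f u := by
    intro u t ht
    induction ht with
    | refl => exact le_rfl
    | tail _ hstep ih =>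
      obtain ⟨a, hstep⟩ := hstep
      exact le_of_lt (lt_of_lt_of_le (hf a _ _ hstep) ih)
  have key : ∀ n u, f u < n → Sat N φ u := by
    intro n
    induction n with
    | zero => intro u hu; omega
    | succ n ih =>
      intro u hu
      by_contra hne
      have hh := h T N u
      simp only [Sat, Form.imp] at hh
      push_neg at hh
      have hann : Sat (N.restrict fun t => Sat N φ t) φ u := by
        by_contra hc
        first
        | exact hh ⟨hne, hc⟩
        | exact hc (hh hne)
      -- all arrow targets reachable from `u` satisfy `φ`, so restriction
      -- changes nothing on the part reachable from `u`
      have := (agree φ (N.restrict fun t => Sat N φ t) N u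
        (by
          intro t ht a v
          have ht' : reach N u t := reach_restrict ht
          simp only [Model.restrict]
          constructor
          · rintro ⟨hr, _⟩; exact hr
          · intro hr
            refine ⟨hr, ih v ?_⟩
            have : f v < f t := hf a t v hr
            have : f t ≤ f u := mono u t ht'
            omega)
        (fun t _ n => Iff.rfl)).mp hann
      exact hne this
  intro u
  exact key (f u + 1) u (Nat.lt_succ_self _)

end NoTrueLies

/-- No non-trivial true lies on the class K: if ¬φ → [φ]φ is valid on all Kripke
models, then φ is valid on all Kripke models. -/
theorem no_nontrivial_true_lies_on_K (A : Type) (φ : Form A)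
    (h : ∀ (S : Type) (M : Model A S) (s : S),
      Sat M (Form.imp (Form.neg φ) (Form.ann φ φ)) s) :
    ∀ (S : Type) (M : Model A S) (s : S), Sat M φ s := by
  intro S M s
  -- the graded tower model over `M`
  set N : Model A (S × ℕ) :=
    ⟨fun a u v => v.2 + 1 = u.2 ∧ M.R a u.1 v.1, fun n u => M.V n u.1⟩ with hN
  have hG : NoTrueLies.Good M N 0 := by
    refine ⟨?_, ?_, ?_⟩
    · rintro a u v ⟨hv, -⟩; exact hv
    · intro a x y k _
      simp [hN]
    · intro n x k; simp [hN]
  have hgrade : ∀ a (u v : S × ℕ), N.R a u v → v.2 < u.2 := by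
    rintro a u v ⟨hv, -⟩; omega
  have hsat : Sat N φ (s, NoTrueLies.depth φ) :=
    NoTrueLies.graded_valid φ h N (fun u => u.2) hgrade _
  exact (NoTrueLies.tower φ M N 0 hG s (NoTrueLies.depth φ) (by omega)).mp hsat
end

section
/- There are no non-trivial 001-valid formulas on the class K of all Kripke models: for every formula φ of believed announcement logic, if the formula ¬φ → [φ](¬φ ∧ [φ]φ) is valid on K, then φ itself is valid on K (equivalently, ¬φ is unsatisfiable on K). -/
/-- No non-trivial 001-valid formulas on the class K: if ¬φ → [φ](¬φ ∧ [φ]φ) is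
valid on all Kripke models, then φ is valid on all Kripke models. -/
theorem no_nontrivial_001_valid_on_K (A : Type) (φ : Form A)
    (h : ∀ (S : Type) (M : Model A S) (s : S),
      Sat M (Form.imp (Form.neg φ)
        (Form.ann φ (Form.conj (Form.neg φ) (Form.ann φ φ)))) s) :
    ∀ (S : Type) (M : Model A S) (s : S), Sat M φ s := by
  intro S M s
  by_contra hns
  have h1 := h S M s
  have h4 := h S (M.restrict (fun t => Sat M φ t)) s
  simp only [Form.imp, Sat] at h1 h4
  tauto
end

section
/- Some true lies are not successful formulas. Let φ := □⊥ ∨ (p ∧ ◇p ∧ ◇¬p) ∨ (¬p ∧ ◇p ∧ □p) in the single-agent language. Then: (i) ¬φ → [φ]φ is valid on the class K45 (hence also on KD45), so φ is 01-valid (a true lie); (ii) φ → [φ]φ is not valid on KD45 (hence not on K45): there is a pointed KD45 model satisfying φ ∧ [φ]¬φ, so φ is not 11-valid (not a successful formula); and (iii) (¬φ ∧ ◇φ) ∧ [φ]φ is satisfiable on KD45, so φ is moreover a non-trivially believable true lie. -/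
/-- φ := □⊥ ∨ (p ∧ ◇p ∧ ◇¬p) ∨ (¬p ∧ ◇p ∧ □p), single agent. -/
def phi2 : Form Unit :=
  Form.or (Form.box () Form.bot)
    (Form.or
      (Form.conj (Form.atom 0)
        (Form.conj (Form.dia () (Form.atom 0)) (Form.dia () (Form.neg (Form.atom 0)))))
      (Form.conj (Form.neg (Form.atom 0))
        (Form.conj (Form.dia () (Form.atom 0)) (Form.box () (Form.atom 0)))))


def decSat {A S : Type} [Fintype S] :
    ∀ (φ : Form A) (M : Model A S), (∀ a s t, Decidable (M.R a s t)) →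
      (∀ n s, Decidable (M.V n s)) → ∀ s, Decidable (Sat M φ s)
  | .atom n, M, _, hV, s => hV n s
  | .neg φ, M, hR, hV, s => @instDecidableNot _ (decSat φ M hR hV s)
  | .conj φ ψ, M, hR, hV, s =>
      @instDecidableAnd _ _ (decSat φ M hR hV s) (decSat ψ M hR hV s)
  | .box a φ, M, hR, hV, s =>
      haveI : ∀ t, Decidable (Sat M φ t) := fun t => decSat φ M hR hV t
      haveI : ∀ t, Decidable (M.R a s t) := hR a s
      show Decidable (∀ t, M.R a s t → Sat M φ t) from inferInstance
  | .ann φ ψ, M, hR, hV, s =>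
      decSat ψ (M.restrict fun t => Sat M φ t)
        (fun a u v => @instDecidableAnd _ _ (hR a u v) (decSat φ M hR hV v)) hV s

instance {A S : Type} [Fintype S] (M : Model A S) [hR : ∀ a s t, Decidable (M.R a s t)]
    [hV : ∀ n s, Decidable (M.V n s)] (φ : Form A) (s : S) : Decidable (Sat M φ s) :=
  decSat φ M hR hV s


lemma sat_or {A S : Type} (M : Model A S) (φ ψ : Form A) (s : S) :
    Sat M (Form.or φ ψ) s ↔ Sat M φ s ∨ Sat M ψ s := by
  simp only [Form.or, Sat]; tauto

lemma sat_dia {A S : Type} (M : Model A S) (a : A) (φ : Form A) (s : S) :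
    Sat M (Form.dia a φ) s ↔ ∃ t, M.R a s t ∧ Sat M φ t := by
  simp only [Form.dia, Sat, not_forall, not_not]
  constructor
  · rintro ⟨t, ht⟩; exact ⟨t, by tauto⟩
  · rintro ⟨t, h1, h2⟩; exact ⟨t, by tauto⟩

lemma sat_boxbot {A S : Type} (M : Model A S) (a : A) (s : S) :
    Sat M (Form.box a Form.bot) s ↔ ∀ t, ¬ M.R a s t := by
  simp only [Form.bot, Sat]
  constructor
  · intro h t ht; exact (h t ht).2 (h t ht).1
  · intro h t ht; exact absurd ht (h t)

lemma sat_phi2 {S : Type} (M : Model Unit S) (s : S) :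
    Sat M phi2 s ↔
      (∀ t, ¬ M.R () s t) ∨
      (M.V 0 s ∧ (∃ t, M.R () s t ∧ M.V 0 t) ∧ (∃ t, M.R () s t ∧ ¬ M.V 0 t)) ∨
      (¬ M.V 0 s ∧ (∃ t, M.R () s t ∧ M.V 0 t) ∧ ∀ t, M.R () s t → M.V 0 t) := by
  rw [phi2, sat_or, sat_or, sat_boxbot]
  simp only [Sat, sat_dia]

lemma key {S : Type} (M : Model Unit S) (h45 : isK45 M) (s : S)
    (hs : ¬ Sat M phi2 s) : Sat (M.restrict fun t => Sat M phi2 t) phi2 s := by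
  obtain ⟨htr, heu⟩ := h45 ()
  rw [sat_phi2] at hs
  have hnB : ¬ (M.V 0 s ∧ (∃ t, M.R () s t ∧ M.V 0 t) ∧ ∃ t, M.R () s t ∧ ¬ M.V 0 t) :=
    fun h => hs (Or.inr (Or.inl h))
  rw [sat_phi2]
  simp only [Model.restrict]
  by_cases hmix : (∃ t, M.R () s t ∧ M.V 0 t) ∧ (∃ t, M.R () s t ∧ ¬ M.V 0 t)
  · obtain ⟨⟨tp, htp, hvp⟩, ⟨tn, htn, hvn⟩⟩ := hmix
    have hVs : ¬ M.V 0 s := fun h => hnB ⟨h, ⟨tp, htp, hvp⟩, ⟨tn, htn, hvn⟩⟩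
    refine Or.inr (Or.inr ⟨hVs, ⟨tp, ⟨htp, ?_⟩, hvp⟩, ?_⟩)
    · rw [sat_phi2]
      exact Or.inr (Or.inl ⟨hvp, ⟨tp, heu _ _ _ htp htp, hvp⟩, ⟨tn, heu _ _ _ htp htn, hvn⟩⟩)
    · rintro u ⟨hru, hphiu⟩
      by_contra hVu
      rw [sat_phi2] at hphiu
      rcases hphiu with h' | ⟨hVu', _⟩ | ⟨_, _, hall⟩
      · exact h' u (heu _ _ _ hru hru)
      · exact hVu hVu'
      · exact hvn (hall tn (heu _ _ _ hru htn))
  · refine Or.inl ?_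
    rintro u ⟨hru, hphiu⟩
    rw [sat_phi2] at hphiu
    have hruu : M.R () u u := heu _ _ _ hru hru
    rcases hphiu with h' | ⟨hVu, ⟨w, hw, hVw⟩, ⟨w', hw', hVw'⟩⟩ | ⟨hVu, ⟨w, hw, hVw⟩, _⟩
    · exact h' u hruu
    · exact hmix ⟨⟨u, hru, hVu⟩, ⟨w', htr _ _ _ hru hw', hVw'⟩⟩
    · exact hmix ⟨⟨w, htr _ _ _ hru hw, hVw⟩, ⟨u, hru, hVu⟩⟩

def M2 : Model Unit (Fin 2) := ⟨fun _ _ _ => True, fun n s => n = 0 ∧ s = 0⟩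
def M3 : Model Unit (Fin 3) := ⟨fun _ _ t => t ≠ 0, fun n s => n = 0 ∧ s = 1⟩

instance (a : Unit) (s t : Fin 2) : Decidable (M2.R a s t) := Decidable.isTrue trivial
instance (n : ℕ) (s : Fin 2) : Decidable (M2.V n s) :=
  inferInstanceAs (Decidable (n = 0 ∧ s = 0))
instance (a : Unit) (s t : Fin 3) : Decidable (M3.R a s t) :=
  inferInstanceAs (Decidable (t ≠ 0))
instance (n : ℕ) (s : Fin 3) : Decidable (M3.V n s) :=
  inferInstanceAs (Decidable (n = 0 ∧ s = 1))


lemma hM2 : isKD45 M2 :=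
  fun _ => ⟨fun _ _ _ _ _ => trivial, fun _ _ _ _ _ => trivial, fun x => ⟨x, trivial⟩⟩

lemma hM3 : isKD45 M3 :=
  fun _ => ⟨fun _ _ _ _ h => h, fun _ _ _ _ h => h, fun _ => ⟨1, Fin.one_pos.ne'⟩⟩

lemma hM2sat : Sat M2 (Form.conj phi2 (Form.ann phi2 (Form.neg phi2))) 0 := by decide

lemma kd45_k45 {A S : Type} {M : Model A S} (h : isKD45 M) : isK45 M :=
  fun a => ⟨(h a).1, (h a).2.1⟩

lemma k45_valid (S : Type) (M : Model Unit S) (s : S) (h45 : isK45 M) :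
    Sat M (Form.imp (Form.neg phi2) (Form.ann phi2 phi2)) s := by
  simp only [Form.imp, Sat]
  rintro ⟨h1, h2⟩
  exact h2 (key M h45 s h1)



/-- Some true lies are not successful formulas:
(i) ¬φ → [φ]φ is valid on K45 (hence on KD45);
(ii) some pointed KD45 model satisfies φ ∧ [φ]¬φ (so φ → [φ]φ is not valid on
KD45, hence not on K45);
(iii) (¬φ ∧ ◇φ) ∧ [φ]φ is satisfiable on KD45 (φ is a non-trivially believable
true lie). -/

theorem true_lie_not_successful :
    (∀ (S : Type) (M : Model Unit S) (s : S), isK45 M →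
      Sat M (Form.imp (Form.neg phi2) (Form.ann phi2 phi2)) s) ∧
    (∀ (S : Type) (M : Model Unit S) (s : S), isKD45 M →
      Sat M (Form.imp (Form.neg phi2) (Form.ann phi2 phi2)) s) ∧
    (∃ (S : Type) (M : Model Unit S) (s : S), isKD45 M ∧
      Sat M (Form.conj phi2 (Form.ann phi2 (Form.neg phi2))) s) ∧
    ¬ (∀ (S : Type) (M : Model Unit S) (s : S), isKD45 M →
      Sat M (Form.imp phi2 (Form.ann phi2 phi2)) s) ∧
    ¬ (∀ (S : Type) (M : Model Unit S) (s : S), isK45 M →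
      Sat M (Form.imp phi2 (Form.ann phi2 phi2)) s) ∧
    (∃ (S : Type) (M : Model Unit S) (s : S), isKD45 M ∧
      Sat M (Form.conj (Form.conj (Form.neg phi2) (Form.dia () phi2))
        (Form.ann phi2 phi2)) s) := by
  refine ⟨k45_valid, fun S M s h => k45_valid S M s (kd45_k45 h),
    ⟨Fin 2, M2, 0, hM2, hM2sat⟩, ?_, ?_⟩
  · intro hall
    have h := hall (Fin 2) M2 0 hM2
    simp only [Form.imp, Sat] at h
    have h3 := hM2sat
    simp only [Sat] at h3
    exact h ⟨h3.1, h3.2⟩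
  refine ⟨?_, ⟨Fin 3, M3, 0, hM3, by decide⟩⟩
  · intro hall
    have h := hall (Fin 2) M2 0 (kd45_k45 hM2)
    simp only [Form.imp, Sat] at h
    have h3 := hM2sat
    simp only [Sat] at h3
    exact h ⟨h3.1, h3.2⟩
end

section
/- Let χ := ¬□⊥ ∧ ((◇□⊥ ∧ ◇¬□⊥) → ◇(p ∧ □⊥)) in the single-agent language. For every function σ : ℕ⁺ → {0,1} there exists a pointed Kripke model (M,s) such that for every n ≥ 0, M|χ^n, s ⊨ σ_{n+1}(χ). In particular χ is σ-satisfiable on the class K of all Kripke models for every infinite binary string σ; taking an unstable σ (one in which both digits occur infinitely often), χ is an unstable formula: its truth value at the designated state never stabilizes under iterated announcement of χ. -/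
/-- Iterated announcement: M|φ^0 = M and M|φ^{n+1} = (M|φ^n)|φ. -/
def updIter {A S : Type} (M : Model A S) (φ : Form A) : ℕ → Model A S
  | 0 => M
  | n + 1 => (updIter M φ n).restrict (fun t => Sat (updIter M φ n) φ t)

/-- χ := ¬□⊥ ∧ ((◇□⊥ ∧ ◇¬□⊥) → ◇(p ∧ □⊥)), single agent. -/
def chi3 : Form Unit :=
  Form.conj (Form.neg (Form.box () Form.bot))
    (Form.imp
      (Form.conj (Form.dia () (Form.box () Form.bot))
        (Form.dia () (Form.neg (Form.box () Form.bot))))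
      (Form.dia () (Form.conj (Form.atom 0) (Form.box () Form.bot))))

inductive St : Type
  | s | w | x (m j : ℕ)

def Rk (σ : ℕ → Bool) (k : ℕ) (a b : St) : Prop :=
  (a = St.w ∧ b = St.w) ∨ (a = St.s ∧ b = St.w) ∨
  (∃ m, a = St.s ∧ b = St.x m 0 ∧ σ m = false ∧ k ≤ m) ∨
  (∃ m j, a = St.x m j ∧ b = St.x m (j+1) ∧ k + j < m)

def Mk (σ : ℕ → Bool) (k : ℕ) : Model Unit St :=
  ⟨fun _ => Rk σ k, fun _ _ => False⟩

lemma sat_chi_iff (M : Model Unit St) (hV : ∀ n t, ¬ M.V n t) (t : St) :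
    Sat M chi3 t ↔ (∃ u, M.R () t u) ∧
      ¬((∃ u, M.R () t u ∧ ∀ v, ¬ M.R () u v) ∧
        (∃ u, M.R () t u ∧ ∃ v, M.R () u v)) := by
  have hV' : ∀ n t, M.V n t = False := fun n t => eq_false (hV n t)
  simp only [chi3, Sat, Form.imp, Form.dia, Form.bot, hV']
  push_neg
  simp only [false_and, and_false, not_false_iff, imp_false, not_not, not_forall,
    not_exists, not_and, and_true, exists_false, imp_false]


lemma Rk_iff (σ : ℕ → Bool) (k : ℕ) (a b : St) :
    Rk σ k a b ↔
      ((a = St.w ∧ b = St.w) ∨ (a = St.s ∧ b = St.w) ∨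
      (∃ m, a = St.s ∧ b = St.x m 0 ∧ σ m = false ∧ k ≤ m) ∨
      (∃ m j, a = St.x m j ∧ b = St.x m (j+1) ∧ k + j < m)) := Iff.rfl

lemma MkR_iff (σ : ℕ → Bool) (k : ℕ) (a b : St) :
    (Mk σ k).R () a b ↔
      ((a = St.w ∧ b = St.w) ∨ (a = St.s ∧ b = St.w) ∨
      (∃ m, a = St.s ∧ b = St.x m 0 ∧ σ m = false ∧ k ≤ m) ∨
      (∃ m j, a = St.x m j ∧ b = St.x m (j+1) ∧ k + j < m)) := Iff.rfl

lemma satChi_w (σ : ℕ → Bool) (k : ℕ) : Sat (Mk σ k) chi3 St.w := by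
  rw [sat_chi_iff _ (fun n t h => h)]
  refine ⟨⟨St.w, (MkR_iff σ k _ _).mpr (Or.inl ⟨rfl, rfl⟩)⟩, ?_⟩
  rintro ⟨⟨u, hu, hdead⟩, -⟩
  rw [MkR_iff] at hu
  rcases hu with ⟨-, rfl⟩ | ⟨h, -⟩ | ⟨m, h, -⟩ | ⟨m, j, h, -⟩
  · exact hdead St.w ((MkR_iff σ k _ _).mpr (Or.inl ⟨rfl, rfl⟩))
  · exact St.noConfusion h
  · exact St.noConfusion h
  · exact St.noConfusion h

lemma satChi_x (σ : ℕ → Bool) (k m j : ℕ) :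
    Sat (Mk σ k) chi3 (St.x m j) ↔ k + j < m := by
  rw [sat_chi_iff _ (fun n t h => h)]
  constructor
  · rintro ⟨⟨u, hu⟩, -⟩
    rw [MkR_iff] at hu
    rcases hu with ⟨h, -⟩ | ⟨h, -⟩ | ⟨m', h, -⟩ | ⟨m', j', h, -, hlt⟩
    · exact St.noConfusion h
    · exact St.noConfusion h
    · exact St.noConfusion h
    · injection h with h1 h2; omega
  · intro hlt
    refine ⟨⟨St.x m (j+1), (MkR_iff σ k _ _).mpr
      (Or.inr (Or.inr (Or.inr ⟨m, j, rfl, rfl, hlt⟩)))⟩, ?_⟩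
    rintro ⟨⟨d, hd, hdead⟩, ⟨e, he, v, hv⟩⟩
    rw [MkR_iff] at hd he
    rcases hd with ⟨h1, -⟩ | ⟨h1, -⟩ | ⟨m1, h1, -⟩ | ⟨m1, j1, h1, rfl, -⟩
    · exact St.noConfusion h1
    · exact St.noConfusion h1
    · exact St.noConfusion h1
    · rcases he with ⟨h2, -⟩ | ⟨h2, -⟩ | ⟨m2, h2, -⟩ | ⟨m2, j2, h2, rfl, -⟩
      · exact St.noConfusion h2
      · exact St.noConfusion h2
      · exact St.noConfusion h2
      · injection h1 with e1 e2
        injection h2 with e3 e4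
        subst e1; subst e2; subst e3; subst e4
        exact hdead v hv

lemma satChi_s (σ : ℕ → Bool) (k : ℕ) :
    Sat (Mk σ k) chi3 St.s ↔ σ k = true := by
  rw [sat_chi_iff _ (fun n t h => h)]
  constructor
  · rintro ⟨-, h2⟩
    by_contra hσ
    simp only [Bool.not_eq_true] at hσ
    apply h2
    refine ⟨⟨St.x k 0, (MkR_iff σ k _ _).mpr
        (Or.inr (Or.inr (Or.inl ⟨k, rfl, rfl, hσ, le_refl k⟩))), ?_⟩,
      ⟨St.w, (MkR_iff σ k _ _).mpr (Or.inr (Or.inl ⟨rfl, rfl⟩)),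
        St.w, (MkR_iff σ k _ _).mpr (Or.inl ⟨rfl, rfl⟩)⟩⟩
    intro v hv
    rw [MkR_iff] at hv
    rcases hv with ⟨h, -⟩ | ⟨h, -⟩ | ⟨m, h, -⟩ | ⟨m, j, h, -, hlt⟩
    · exact St.noConfusion h
    · exact St.noConfusion h
    · exact St.noConfusion h
    · injection h with h1 h2; omega
  · intro hσ
    refine ⟨⟨St.w, (MkR_iff σ k _ _).mpr (Or.inr (Or.inl ⟨rfl, rfl⟩))⟩, ?_⟩
    rintro ⟨⟨d, hd, hdead⟩, -⟩
    rw [MkR_iff] at hd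
    rcases hd with ⟨h, -⟩ | ⟨-, rfl⟩ | ⟨m, -, rfl, hm, hk⟩ | ⟨m, j, h, -⟩
    · exact St.noConfusion h
    · exact hdead St.w ((MkR_iff σ k _ _).mpr (Or.inl ⟨rfl, rfl⟩))
    · rcases Nat.lt_or_ge k m with hlt | hge
      · exact hdead (St.x m 1) ((MkR_iff σ k _ _).mpr
          (Or.inr (Or.inr (Or.inr ⟨m, 0, rfl, rfl, by omega⟩))))
      · have hkm : m = k := by omega
        subst hkm
        rw [hσ] at hm
        exact Bool.noConfusion hm
    · exact St.noConfusion h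

lemma restrict_eq (σ : ℕ → Bool) (k : ℕ) :
    (Mk σ k).restrict (fun t => Sat (Mk σ k) chi3 t) = Mk σ (k+1) := by
  have h : ∀ u t : St, ((Mk σ k).R () u t ∧ Sat (Mk σ k) chi3 t) ↔ Rk σ (k+1) u t := by
    intro u t
    constructor
    · rintro ⟨hr, hs⟩
      rw [MkR_iff] at hr
      rw [Rk_iff]
      rcases hr with ⟨rfl, rfl⟩ | ⟨rfl, rfl⟩ | ⟨m, rfl, rfl, hm, hk⟩ | ⟨m, j, rfl, rfl, hk⟩
      · exact Or.inl ⟨rfl, rfl⟩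
      · exact Or.inr (Or.inl ⟨rfl, rfl⟩)
      · have := (satChi_x σ k m 0).mp hs
        exact Or.inr (Or.inr (Or.inl ⟨m, rfl, rfl, hm, by omega⟩))
      · have := (satChi_x σ k m (j+1)).mp hs
        exact Or.inr (Or.inr (Or.inr ⟨m, j, rfl, rfl, by omega⟩))
    · intro hr
      rw [Rk_iff] at hr
      rcases hr with ⟨rfl, rfl⟩ | ⟨rfl, rfl⟩ | ⟨m, rfl, rfl, hm, hk⟩ | ⟨m, j, rfl, rfl, hk⟩
      · exact ⟨Or.inl ⟨rfl, rfl⟩, satChi_w σ k⟩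
      · exact ⟨Or.inr (Or.inl ⟨rfl, rfl⟩), satChi_w σ k⟩
      · exact ⟨Or.inr (Or.inr (Or.inl ⟨m, rfl, rfl, hm, by omega⟩)),
          (satChi_x σ k m 0).mpr (by omega)⟩
      · exact ⟨Or.inr (Or.inr (Or.inr ⟨m, j, rfl, rfl, by omega⟩)),
          (satChi_x σ k m (j+1)).mpr (by omega)⟩
  have h2 : (fun (a : Unit) (u t : St) => (Mk σ k).R a u t ∧ Sat (Mk σ k) chi3 t)
      = (fun _ => Rk σ (k+1)) := by
    funext a u t
    exact propext (h u t)
  exact congrArg (fun R => Model.mk R (fun _ _ => False)) h2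

lemma updIter_eq (σ : ℕ → Bool) (k : ℕ) : updIter (Mk σ 0) chi3 k = Mk σ k := by
  induction k with
  | zero => rfl
  | succ k ih => rw [updIter, ih, restrict_eq]

/-- For every infinite binary string σ (here σ n encodes σ_{n+1}, with true = 1),
there is a pointed Kripke model such that for all n ≥ 0, M|χ^n, s ⊨ σ_{n+1}(χ).
Hence χ is σ-satisfiable on K for every σ, and in particular unstable. -/
theorem chi_sigma_satisfiable_on_K (σ : ℕ → Bool) :
    ∃ (S : Type) (M : Model Unit S) (s : S),
      ∀ n : ℕ, Sat (updIter M chi3 n) (if σ n then chi3 else Form.neg chi3) s := by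
  refine ⟨St, Mk σ 0, St.s, fun n => ?_⟩
  rw [updIter_eq]
  cases h : σ n with
  | true =>
    rw [if_pos rfl]
    exact (satChi_s σ n).mpr h
  | false =>
    rw [if_neg Bool.false_ne_true]
    show ¬ Sat (Mk σ n) chi3 St.s
    rw [satChi_s]
    simp [h]
end

section
/- The single-agent formula □p is a true lie on K45: the formula ¬□p → [□p]□p is valid on the class K45 of Kripke models with a transitive and euclidean accessibility relation. -/
/-- The single-agent formula □p is a true lie on K45: ¬□p → [□p]□p is valid on K45. -/
theorem box_p_is_true_lie_on_K45 :
    ∀ (S : Type) (M : Model Unit S) (s : S), isK45 M →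
      Sat M (Form.imp (Form.neg (Form.box () (Form.atom 0)))
        (Form.ann (Form.box () (Form.atom 0)) (Form.box () (Form.atom 0)))) s := by
  intro S M s hK
  intro h
  apply h.2
  intro t ht
  obtain ⟨hst, hbox⟩ := ht
  exact hbox t ((hK ()).2 s t t hst hst)
end

section
/- The single-agent formula p ∨ □p is a true lie on K45: the formula ¬(p ∨ □p) → [p ∨ □p](p ∨ □p) is valid on the class K45 of Kripke models with a transitive and euclidean accessibility relation. -/
/-- p ∨ □p is a true lie on K45: ¬(p ∨ □p) → [p ∨ □p](p ∨ □p) is valid on K45. -/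
theorem p_or_box_p_is_true_lie_on_K45 :
    ∀ (S : Type) (M : Model Unit S) (s : S), isK45 M →
      Sat M (Form.imp (Form.neg (Form.or (Form.atom 0) (Form.box () (Form.atom 0))))
        (Form.ann (Form.or (Form.atom 0) (Form.box () (Form.atom 0)))
          (Form.or (Form.atom 0) (Form.box () (Form.atom 0))))) s := by
  intro S M s hK
  obtain ⟨-, heucl⟩ := hK ()
  simp only [Form.imp, Form.or, Sat, Model.restrict, not_and, not_not, not_forall]
  intro h
  obtain ⟨hnp, u, hsu, hnpu⟩ := h
  rintro ⟨-, t, ⟨hst, hφ⟩, hnpt⟩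
  exact hnpu (not_not.mp (fun hc => (hφ hnpt) ⟨u, heucl s t u hst hsu, hc⟩))
end

section
/- The single-agent formula p ∨ □p is a non-trivially believable true lie on KD45: (i) (¬(p ∨ □p) ∧ ◇(p ∨ □p)) → [p ∨ □p](p ∨ □p) is valid on the class KD45, and (ii) (¬(p ∨ □p) ∧ ◇(p ∨ □p)) ∧ [p ∨ □p](p ∨ □p) is satisfiable on the class KD45. -/
/-- The single-agent formula p ∨ □p. -/
def pOrBoxP : Form Unit := Form.or (Form.atom 0) (Form.box () (Form.atom 0))

lemma sat_pOrBoxP {S : Type} (M : Model Unit S) (s : S) :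
    Sat M pOrBoxP s ↔ (M.V 0 s ∨ ∀ t, M.R () s t → M.V 0 t) := by
  simp [pOrBoxP, Form.or, Sat, or_iff_not_imp_left]

lemma ann_valid {S : Type} (M : Model Unit S)
    (heuc : ∀ x y z : S, M.R () x y → M.R () x z → M.R () y z) (s : S) :
    Sat M (Form.ann pOrBoxP pOrBoxP) s := by
  show Sat (M.restrict _) pOrBoxP s
  rw [sat_pOrBoxP]
  by_cases hp : M.V 0 s
  · exact Or.inl hp
  · right
    rintro t ⟨hRt, hφt⟩
    rcases (sat_pOrBoxP M t).mp hφt with h | h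
    · exact h
    · exact h t (heuc s t t hRt hRt)

/-- p ∨ □p is a non-trivially believable true lie on KD45:
(i) (¬(p ∨ □p) ∧ ◇(p ∨ □p)) → [p ∨ □p](p ∨ □p) is valid on KD45, and
(ii) (¬(p ∨ □p) ∧ ◇(p ∨ □p)) ∧ [p ∨ □p](p ∨ □p) is satisfiable on KD45. -/
theorem p_or_box_p_nontrivially_believable_true_lie_on_KD45 :
    (∀ (S : Type) (M : Model Unit S) (s : S), isKD45 M →
      Sat M (Form.imp (Form.conj (Form.neg pOrBoxP) (Form.dia () pOrBoxP))
        (Form.ann pOrBoxP pOrBoxP)) s) ∧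
    (∃ (S : Type) (M : Model Unit S) (s : S), isKD45 M ∧
      Sat M (Form.conj (Form.conj (Form.neg pOrBoxP) (Form.dia () pOrBoxP))
        (Form.ann pOrBoxP pOrBoxP)) s) := by
  constructor
  · intro S M s hKD
    exact fun h => h.2 (ann_valid M (hKD ()).2.1 s)
  · refine ⟨Bool, ⟨fun _ _ _ => True, fun _ s => s = true⟩, false,
      fun _ => ⟨fun _ _ _ _ _ => trivial, fun _ _ _ _ _ => trivial, fun x => ⟨x, trivial⟩⟩, ?_, ?_⟩
    · constructor
      · show ¬ _
        rw [sat_pOrBoxP]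
        simp
      · show ¬ ∀ t, _ → ¬ Sat _ pOrBoxP t
        push_neg
        refine ⟨true, trivial, ?_⟩
        rw [sat_pOrBoxP]
        exact Or.inl rfl
    · exact ann_valid _ (fun _ _ _ _ _ => trivial) _
end

section
/- The single-agent formula p ∧ □p is 01-satisfiable but not 01-valid on KD45: there is a pointed KD45 model satisfying ¬(p ∧ □p) ∧ [p ∧ □p](p ∧ □p) (so p ∧ □p is sometimes a true lie), and there is a pointed KD45 model satisfying ¬(p ∧ □p) ∧ [p ∧ □p]¬(p ∧ □p) (so ¬(p ∧ □p) → [p ∧ □p](p ∧ □p) is not valid on KD45). -/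
/-- The single-agent formula p ∧ □p. -/
def pAndBoxP : Form Unit := Form.conj (Form.atom 0) (Form.box () (Form.atom 0))

/-- p ∧ □p is 01-satisfiable but not 01-valid on KD45: some pointed KD45 model
satisfies ¬(p ∧ □p) ∧ [p ∧ □p](p ∧ □p), and some pointed KD45 model satisfies
¬(p ∧ □p) ∧ [p ∧ □p]¬(p ∧ □p) (hence ¬(p ∧ □p) → [p ∧ □p](p ∧ □p) is not valid
on KD45). -/
theorem p_and_box_p_01_satisfiable_not_01_valid :
    (∃ (S : Type) (M : Model Unit S) (s : S), isKD45 M ∧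
      Sat M (Form.conj (Form.neg pAndBoxP) (Form.ann pAndBoxP pAndBoxP)) s) ∧
    (∃ (S : Type) (M : Model Unit S) (s : S), isKD45 M ∧
      Sat M (Form.conj (Form.neg pAndBoxP) (Form.ann pAndBoxP (Form.neg pAndBoxP))) s) ∧
    ¬ (∀ (S : Type) (M : Model Unit S) (s : S), isKD45 M →
      Sat M (Form.imp (Form.neg pAndBoxP) (Form.ann pAndBoxP pAndBoxP)) s) := by
  have hM1 : isKD45 (⟨fun _ _ y => y = false, fun _ s => s = true⟩ : Model Unit Bool) := by
    intro a
    exact ⟨fun _ _ _ _ h2 => h2, fun _ _ _ _ h2 => h2, fun _ => ⟨false, rfl⟩⟩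
  have hM2 : isKD45 (⟨fun _ _ _ => True, fun _ _ => False⟩ : Model Unit Unit) := by
    intro a
    exact ⟨fun _ _ _ _ _ => trivial, fun _ _ _ _ _ => trivial, fun _ => ⟨(), trivial⟩⟩
  have h2 : Sat (⟨fun _ _ _ => True, fun _ _ => False⟩ : Model Unit Unit)
      (Form.conj (Form.neg pAndBoxP) (Form.ann pAndBoxP (Form.neg pAndBoxP))) () := by
    simp [Sat, pAndBoxP, Model.restrict]
  refine ⟨⟨Bool, _, true, hM1, ?_⟩, ⟨Unit, _, (), hM2, h2⟩, ?_⟩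
  · constructor
    · simp [Sat, pAndBoxP, Model.restrict]
    · simp [Sat, pAndBoxP, Model.restrict]
  · intro h
    have := h Unit ⟨fun _ _ _ => True, fun _ _ => False⟩ () hM2
    simp [Sat, pAndBoxP, Model.restrict, Form.imp] at this
end

section
/- The single-agent formula p ∧ □p is not a believable true lie on KD45: the formula (¬(p ∧ □p) ∧ ◇(p ∧ □p)) ∧ [p ∧ □p]¬(p ∧ □p) is satisfiable on the class KD45, so (¬(p ∧ □p) ∧ ◇(p ∧ □p)) → [p ∧ □p](p ∧ □p) is not valid on KD45. -/
/-- p ∧ □p is not a believable true lie on KD45: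
(¬(p ∧ □p) ∧ ◇(p ∧ □p)) ∧ [p ∧ □p]¬(p ∧ □p) is satisfiable on KD45, so
(¬(p ∧ □p) ∧ ◇(p ∧ □p)) → [p ∧ □p](p ∧ □p) is not valid on KD45. -/
theorem p_and_box_p_not_believable_true_lie :
    (∃ (S : Type) (M : Model Unit S) (s : S), isKD45 M ∧
      Sat M (Form.conj (Form.conj (Form.neg pAndBoxP) (Form.dia () pAndBoxP))
        (Form.ann pAndBoxP (Form.neg pAndBoxP))) s) ∧
    ¬ (∀ (S : Type) (M : Model Unit S) (s : S), isKD45 M →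
      Sat M (Form.imp (Form.conj (Form.neg pAndBoxP) (Form.dia () pAndBoxP))
        (Form.ann pAndBoxP pAndBoxP)) s) := by
  have hM : isKD45 (⟨fun _ _ t => t = true, fun _ s => s = true⟩ : Model Unit Bool) := by
    intro a
    refine ⟨?_, ?_, ?_⟩ <;> simp
  have hSat : Sat (⟨fun _ _ t => t = true, fun _ s => s = true⟩ : Model Unit Bool)
      (Form.conj (Form.conj (Form.neg pAndBoxP) (Form.dia () pAndBoxP))
        (Form.ann pAndBoxP (Form.neg pAndBoxP))) false := by
    simp [Sat, pAndBoxP, Form.dia, Model.restrict]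
  constructor
  · exact ⟨Bool, _, false, hM, hSat⟩
  · intro h
    have := h Bool ⟨fun _ _ t => t = true, fun _ s => s = true⟩ false hM
    simp [Sat, pAndBoxP, Form.imp, Form.dia, Model.restrict] at this
end

section
/- The single-agent Moore sentence p ∧ ¬□p is a non-trivial self-refuting (10-valid) formula: (p ∧ ¬□p) → [p ∧ ¬□p]¬(p ∧ ¬□p) is valid on the class K of all Kripke models, and (p ∧ ¬□p) ∧ [p ∧ ¬□p]¬(p ∧ ¬□p) is satisfiable on the class KD45. -/
/-- The single-agent Moore sentence p ∧ ¬□p. -/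
def moore : Form Unit := Form.conj (Form.atom 0) (Form.neg (Form.box () (Form.atom 0)))

/-- The Moore sentence p ∧ ¬□p is a non-trivial self-refuting (10-valid) formula:
(p ∧ ¬□p) → [p ∧ ¬□p]¬(p ∧ ¬□p) is valid on K, and
(p ∧ ¬□p) ∧ [p ∧ ¬□p]¬(p ∧ ¬□p) is satisfiable on KD45. -/
theorem moore_nontrivially_self_refuting :
    (∀ (S : Type) (M : Model Unit S) (s : S),
      Sat M (Form.imp moore (Form.ann moore (Form.neg moore))) s) ∧
    (∃ (S : Type) (M : Model Unit S) (s : S), isKD45 M ∧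
      Sat M (Form.conj moore (Form.ann moore (Form.neg moore))) s) := by
  have valid : ∀ (S : Type) (M : Model Unit S) (s : S),
      Sat M (Form.ann moore (Form.neg moore)) s := by
    intro S M s
    simp only [moore, Sat, Model.restrict]
    rintro ⟨hp, hnb⟩
    exact hnb fun t ⟨_, ht, _⟩ => ht
  constructor
  · intro S M s
    simp only [Form.imp, moore, Sat]
    rintro ⟨_, h⟩
    exact h (valid S M s)
  · refine ⟨Bool, ⟨fun _ _ y => y = false, fun _ s => s = true⟩, true, ?_, ?_, ?_⟩
    · intro a
      refine ⟨fun x y z _ h => h, fun x y z _ h => h, fun x => ⟨false, rfl⟩⟩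
    · exact ⟨rfl, fun h => by have := h false rfl; simp [Sat] at this⟩
    · exact valid _ _ _
end

section
/- The single-agent formula ¬□p is a successful formula on K45: the formula ¬□p → [¬□p]¬□p is valid on the class K45 of Kripke models with a transitive and euclidean accessibility relation. -/
/-- ¬□p is a successful formula on K45: ¬□p → [¬□p]¬□p is valid on K45. -/
theorem neg_box_p_successful_on_K45 :
    ∀ (S : Type) (M : Model Unit S) (s : S), isK45 M →
      Sat M (Form.imp (Form.neg (Form.box () (Form.atom 0)))
        (Form.ann (Form.neg (Form.box () (Form.atom 0)))
          (Form.neg (Form.box () (Form.atom 0))))) s := by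
  intro S M s hK45
  simp only [Form.imp, Sat, Model.restrict, not_forall]
  rintro ⟨⟨t, hst, hnpt⟩, h2⟩
  have htt : M.R () t t := (hK45 ()).2 s t t hst hst
  exact h2 ⟨t, ⟨hst, t, htt, hnpt⟩, hnpt⟩
end

section
/- Arrow elimination and state elimination agree up to bisimulation when the announced formula is true: for every announcement-free (basic modal) formula φ and every pointed Kripke model (M,s) with M,s ⊨ φ, the pointed model (M|_φ, s) obtained by state elimination (restricting M to the set of states where φ is true) is bisimilar to the pointed model (M|φ, s) obtained by arrow elimination. -/
/-- Announcement-free (basic modal) formulas. -/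
inductive NoAnn {A : Type} : Form A → Prop
  | atom (n : ℕ) : NoAnn (Form.atom n)
  | neg {φ : Form A} : NoAnn φ → NoAnn (Form.neg φ)
  | conj {φ ψ : Form A} : NoAnn φ → NoAnn ψ → NoAnn (Form.conj φ ψ)
  | box {a : A} {φ : Form A} : NoAnn φ → NoAnn (Form.box a φ)

/-- State elimination: restrict the model to the states satisfying P. -/
def stateElim {A S : Type} (M : Model A S) (P : S → Prop) : Model A {t : S // P t} :=
  ⟨fun a u v => M.R a u.1 v.1, fun n u => M.V n u.1⟩

/-- Z is a bisimulation between M and M'. -/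
def IsBisim {A S S' : Type} (M : Model A S) (M' : Model A S') (Z : S → S' → Prop) : Prop :=
  ∀ u u', Z u u' →
    (∀ n : ℕ, M.V n u ↔ M'.V n u') ∧
    (∀ (a : A) (v : S), M.R a u v → ∃ v' : S', M'.R a u' v' ∧ Z v v') ∧
    (∀ (a : A) (v' : S'), M'.R a u' v' → ∃ v : S, M.R a u v ∧ Z v v')

/-- Pointed bisimilarity. -/
def Bisimilar {A S S' : Type} (M : Model A S) (s : S) (M' : Model A S') (s' : S') : Prop :=
  ∃ Z : S → S' → Prop, IsBisim M M' Z ∧ Z s s'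

/-- When the announced formula φ is true at s, the state-elimination update and
the arrow-elimination update yield bisimilar pointed models. -/
theorem stateElim_bisimilar_arrowElim (A S : Type) (φ : Form A) (hφ : NoAnn φ)
    (M : Model A S) (s : S) (hs : Sat M φ s) :
    Bisimilar (stateElim M (fun t => Sat M φ t)) ⟨s, hs⟩
      (M.restrict (fun t => Sat M φ t)) s := by
  refine ⟨fun u u' => u.1 = u', ?_, rfl⟩
  intro u u' h
  subst h
  refine ⟨fun n => Iff.rfl, ?_, ?_⟩
  · intro a v hv
    exact ⟨v.1, ⟨hv, v.2⟩, rfl⟩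
  · intro a v' hv'
    exact ⟨⟨v', hv'.2⟩, hv'.1, rfl⟩
end

section
/- A formula is successful in believed announcement logic if and only if it is successful in truthful announcement logic: for every announcement-free (basic modal) formula φ and every pointed Kripke model (M,s), M,s satisfies φ → [φ]φ under the believed-announcement (arrow-elimination) semantics if and only if M,s satisfies [φ]φ under the truthful-announcement (state-elimination) semantics. Consequently, for any class X of Kripke models, φ → [φ]φ is valid on X under arrow-elimination semantics iff [φ]φ is valid on X under state-elimination semantics. -/
/-- Truthful-announcement (state-elimination) semantics:
M,s ⊨ [φ]ψ iff M,s ⊨ φ implies M|_φ, s ⊨ ψ. -/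
def SatT {A : Type} : (S : Type) → Model A S → Form A → S → Prop
  | _, M, .atom n, s => M.V n s
  | S, M, .neg φ, s => ¬ SatT S M φ s
  | S, M, .conj φ ψ, s => SatT S M φ s ∧ SatT S M ψ s
  | S, M, .box a φ, s => ∀ t : S, M.R a s t → SatT S M φ t
  | S, M, .ann φ ψ, s =>
      ∀ h : SatT S M φ s,
        SatT {t : S // SatT S M φ t} (stateElim M (fun t => SatT S M φ t)) ψ ⟨s, h⟩

theorem satT_iff_sat {A S : Type} (M : Model A S) {ψ : Form A} (h : NoAnn ψ) :
    ∀ s : S, SatT S M ψ s ↔ Sat M ψ s := by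
  induction h with
  | atom n => intro s; exact Iff.rfl
  | neg _ ih => intro s; exact not_congr (ih s)
  | conj _ _ ih1 ih2 => intro s; exact and_congr (ih1 s) (ih2 s)
  | box _ ih =>
    intro s
    constructor
    · intro H t ht; exact (ih t).mp (H t ht)
    · intro H t ht; exact (ih t).mpr (H t ht)

theorem restrict_iff_stateElim {A S : Type} (M : Model A S) {ψ : Form A} (h : NoAnn ψ)
    (P Q : S → Prop) (hPQ : ∀ t, P t ↔ Q t) :
    ∀ (t : S) (ht : P t),
      Sat (M.restrict Q) ψ t ↔ SatT {u : S // P u} (stateElim M P) ψ ⟨t, ht⟩ := by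
  induction h with
  | atom n => intro t ht; exact Iff.rfl
  | neg _ ih => intro t ht; exact not_congr (ih t ht)
  | conj _ _ ih1 ih2 => intro t ht; exact and_congr (ih1 t ht) (ih2 t ht)
  | box _ ih =>
    intro t ht
    constructor
    · intro H u hu
      exact (ih u.1 u.2).mp (H u.1 ⟨hu, (hPQ u.1).mp u.2⟩)
    · intro H u hu
      exact (ih u ((hPQ u).mpr hu.2)).mpr (H ⟨u, (hPQ u).mpr hu.2⟩ hu.1)

/-- A formula is successful in believed announcement logic iff it is successful in
truthful announcement logic: pointwise, M,s ⊨ φ → [φ]φ (arrow elimination) iff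
M,s ⊨ [φ]φ (state elimination); consequently, for any class X of Kripke models,
φ → [φ]φ is valid on X under arrow elimination iff [φ]φ is valid on X under
state elimination. -/
theorem successful_believed_iff_successful_truthful (A : Type) (φ : Form A)
    (hφ : NoAnn φ) :
    (∀ (S : Type) (M : Model A S) (s : S),
      Sat M (Form.imp φ (Form.ann φ φ)) s ↔ SatT S M (Form.ann φ φ) s) ∧
    (∀ X : (S : Type) → Model A S → Prop,
      (∀ (S : Type) (M : Model A S) (s : S), X S M →
        Sat M (Form.imp φ (Form.ann φ φ)) s) ↔
      (∀ (S : Type) (M : Model A S) (s : S), X S M →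
        SatT S M (Form.ann φ φ) s)) := by
  have main : ∀ (S : Type) (M : Model A S) (s : S),
      Sat M (Form.imp φ (Form.ann φ φ)) s ↔ SatT S M (Form.ann φ φ) s := by
    intro S M s
    have hPQ : ∀ t : S, SatT S M φ t ↔ Sat M φ t := satT_iff_sat M hφ
    have key := restrict_iff_stateElim M hφ (fun t => SatT S M φ t)
      (fun t => Sat M φ t) hPQ s
    show ¬(Sat M φ s ∧ ¬ Sat (M.restrict fun t => Sat M φ t) φ s) ↔
      ∀ h : SatT S M φ s,
        SatT _ (stateElim M (fun t => SatT S M φ t)) φ ⟨s, h⟩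
    constructor
    · intro H h
      have hs : Sat M φ s := (hPQ s).mp h
      have hres : Sat (M.restrict fun t => Sat M φ t) φ s := by
        by_contra hc; exact H ⟨hs, hc⟩
      exact (key h).mp hres
    · rintro H ⟨hs, hn⟩
      exact hn ((key ((hPQ s).mpr hs)).mpr (H ((hPQ s).mpr hs)))
  refine ⟨main, fun X => ?_⟩
  constructor
  · intro H S M s hX; exact (main S M s).mp (H S M s hX)
  · intro H S M s hX; exact (main S M s).mpr (H S M s hX)
end
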